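/- Let x_1, …, x_N be pairwise distinct points of a set Ω, k : Ω × Ω → ℝ a symmetric function such that for every subset S ⊆ {x_1, …, x_N} the Gram matrix K_S = (k(s,s'))_{s,s'∈S} is invertible, and f : Ω → ℝ. For 1 ≤ p ≤ N, define the leave-p-out cross-validation estimator σ̂_{CV(p)}² = (1/C(N,p)) Σ_{A ⊆ {1,…,N}, |A| = p} (1/p) Σ_{n ∈ A} (f(x_n) − m_{S_A}(x_n))² / k_{S_A}(x_n), where S_A = {x_i : i ∉ A}, m_S(x) = k(x,S)ᵀ K_S⁻¹ f_S and k_S(x) = k(x,x) − k(x,S)ᵀ K_S⁻¹ k(x,S) (with m_∅(x) = 0 and k_∅(x) = k(x,x)), and C(N,p) is the binomial coefficient. Then the maximum-likelihood scale estimator σ̂_ML² = (1/N) f(𝐱)ᵀ K⁻¹ f(𝐱), with K = (k(x_i,x_j))_{i,j=1}^N and f(𝐱) = (f(x_1),…,f(x_N)), satisfies σ̂_ML² = (1/N) Σ_{p=1}^{N} σ̂_{CV(p)}². -/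

import Mathlib

open Matrix

variable {Ω : Type*}

/-- The Gram matrix of a kernel `k` over a finite set `A ⊂ Ω`. -/
noncomputable def gramOn (k : Ω → Ω → ℝ) (A : Finset Ω) : Matrix A A ℝ :=
  Matrix.of fun a b => k a.1 b.1

/-- The posterior mean `m_S(x) = k(x,S)ᵀ K_S⁻¹ f_S` (with `m_∅(x) = 0`). -/
noncomputable def postMean (k : Ω → Ω → ℝ) (f : Ω → ℝ) (S : Finset Ω) (x : Ω)
    [DecidableEq Ω] : ℝ :=
  (fun s : S => k x s.1) ⬝ᵥ (gramOn k S)⁻¹.mulVec fun s : S => f s.1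

/-- The posterior variance `k_S(x) = k(x,x) − k(x,S)ᵀ K_S⁻¹ k(x,S)`
(with `k_∅(x) = k(x,x)`). -/
noncomputable def postVar (k : Ω → Ω → ℝ) (S : Finset Ω) (x : Ω) [DecidableEq Ω] : ℝ :=
  k x x - (fun s : S => k x s.1) ⬝ᵥ (gramOn k S)⁻¹.mulVec fun s : S => k x s.1

/-- The leave-`p`-out cross-validation scale estimator
`σ̂_{CV(p)}² = (1/C(N,p)) Σ_{|A| = p} (1/p) Σ_{n ∈ A} (f(x_n) − m_{S_A}(x_n))²/k_{S_A}(x_n)`,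
where `S_A = {x_i : i ∉ A}`. -/
noncomputable def sigmaCVp [DecidableEq Ω] (k : Ω → Ω → ℝ) (f : Ω → ℝ) (N : ℕ)
    (x : Fin N → Ω) (p : ℕ) : ℝ :=
  (1 / (N.choose p : ℝ)) *
    ∑ A ∈ Finset.powersetCard p (Finset.univ : Finset (Fin N)),
      (1 / (p : ℝ)) *
        ∑ n ∈ A,
          (f (x n) - postMean k f (Finset.image x (Finset.univ \ A)) (x n)) ^ 2 /
            postVar k (Finset.image x (Finset.univ \ A)) (x n)

/-! ### Auxiliary material -/

/-- The quadratic form `f_T ᵀ K_T⁻¹ f_T`. -/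
noncomputable def Qform [DecidableEq Ω] (k : Ω → Ω → ℝ) (f : Ω → ℝ) (T : Finset Ω) : ℝ :=
  (fun s : T => f s.1) ⬝ᵥ (gramOn k T)⁻¹.mulVec fun s : T => f s.1

section BlockQuad

variable {m : Type*} [Fintype m] [DecidableEq m]

private lemma schur_entry (A : Matrix m m ℝ) [Invertible A] (b : m → ℝ) (d : ℝ) :
    ((Matrix.of fun _ _ : Unit => d) - (Matrix.of fun i (_ : Unit) => b i)ᴴ * A⁻¹ *
        (Matrix.of fun i (_ : Unit) => b i)) () () = d - b ⬝ᵥ A⁻¹.mulVec b := by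
  simp [Matrix.mul_apply, dotProduct, mulVec, Finset.mul_sum, Finset.sum_mul]
  rw [Finset.sum_comm]
  exact Finset.sum_congr rfl fun x _ => Finset.sum_congr rfl fun i _ => by ring

private lemma block_quad (A : Matrix m m ℝ) (hA : A.IsHermitian) [Invertible A]
    (b g : m → ℝ) (d c : ℝ)
    (hF : IsUnit (Matrix.fromBlocks A (Matrix.of fun i (_ : Unit) => b i)
      (Matrix.of fun i (_ : Unit) => b i)ᴴ (Matrix.of fun _ _ : Unit => d))) :
    d - b ⬝ᵥ A⁻¹.mulVec b ≠ 0 ∧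
    (Sum.elim g fun _ : Unit => c) ⬝ᵥ (Matrix.fromBlocks A (Matrix.of fun i (_ : Unit) => b i)
      (Matrix.of fun i (_ : Unit) => b i)ᴴ (Matrix.of fun _ _ : Unit => d))⁻¹.mulVec
      (Sum.elim g fun _ : Unit => c) =
    g ⬝ᵥ A⁻¹.mulVec g + (c - b ⬝ᵥ A⁻¹.mulVec g)^2 / (d - b ⬝ᵥ A⁻¹.mulVec b) := by
  set B : Matrix m Unit ℝ := Matrix.of fun i (_ : Unit) => b i with hB
  set D : Matrix Unit Unit ℝ := Matrix.of fun _ _ : Unit => d with hD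
  set F := Matrix.fromBlocks A B Bᴴ D with hFdef
  set s : ℝ := d - b ⬝ᵥ A⁻¹.mulVec b with hs
  have hAinv : (⅟ A : Matrix m m ℝ) = A⁻¹ := invOf_eq_nonsing_inv A
  have hdetF : F.det = A.det * (D - Bᴴ * A⁻¹ * B).det := by
    rw [hFdef, Matrix.det_fromBlocks₁₁, hAinv]
  have hdet1 : (D - Bᴴ * A⁻¹ * B).det = s := by
    rw [Matrix.det_unique]
    exact schur_entry A b d
  have hFdet : F.det ≠ 0 := by
    have := (Matrix.isUnit_iff_isUnit_det F).1 hF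
    exact this.ne_zero
  have hsne : s ≠ 0 := by
    intro h
    rw [hdetF, hdet1, h, mul_zero] at hFdet
    exact hFdet rfl
  refine ⟨hsne, ?_⟩
  have hFdu : IsUnit F.det := (Matrix.isUnit_iff_isUnit_det F).1 hF
  have hAdu : IsUnit A.det := isUnit_det_of_invertible A
  set v := Sum.elim g (fun _ : Unit => c) with hv
  set w := F⁻¹.mulVec v with hw
  have hFw : F.mulVec w = v := by
    rw [hw, Matrix.mulVec_mulVec, Matrix.mul_nonsing_inv _ hFdu, Matrix.one_mulVec]
  set xx := w ∘ Sum.inl with hxx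
  set yy := w ∘ Sum.inr with hyy
  have hwxy : w = Sum.elim xx yy := (Sum.elim_comp_inl_inr w).symm
  have hcomp : F.mulVec w = Sum.elim (A.mulVec xx + B.mulVec yy)
      (Bᴴ.mulVec xx + D.mulVec yy) := by
    rw [hFdef, Matrix.fromBlocks_mulVec]
  have h1 : A.mulVec xx + B.mulVec yy = g := by
    funext i
    have := congrFun (hcomp.symm.trans hFw) (Sum.inl i)
    simpa [hv] using this
  have h2 : (Bᴴ.mulVec xx + D.mulVec yy) () = c := by
    have := congrFun (hcomp.symm.trans hFw) (Sum.inr ())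
    simpa [hv] using this
  set z := xx + (A⁻¹ * B).mulVec yy with hz
  have hABy : (A⁻¹ * B).mulVec yy = A⁻¹.mulVec (B.mulVec yy) := (Matrix.mulVec_mulVec _ _ _).symm
  have hAz : A.mulVec z = g := by
    rw [hz, Matrix.mulVec_add, hABy, Matrix.mulVec_mulVec,
      Matrix.mul_nonsing_inv _ hAdu, Matrix.one_mulVec, h1]
  have hzval : z = A⁻¹.mulVec g := by
    rw [← hAz, Matrix.mulVec_mulVec, Matrix.nonsing_inv_mul _ hAdu, Matrix.one_mulVec]
  have key := Matrix.schur_complement_eq₁₁ (A := A) B D xx yy hA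
  simp only [star_trivial] at key
  have hQ : v ⬝ᵥ F⁻¹.mulVec v = (Sum.elim xx yy) ᵥ* F ⬝ᵥ (Sum.elim xx yy) := by
    rw [← hw]
    nth_rewrite 1 [← hFw]
    rw [dotProduct_comm, Matrix.dotProduct_mulVec, hwxy]
  rw [hQ, hFdef, key]
  have hterm1 : (xx + (A⁻¹ * B) *ᵥ yy) ᵥ* A ⬝ᵥ (xx + (A⁻¹ * B) *ᵥ yy)
      = g ⬝ᵥ A⁻¹.mulVec g := by
    rw [← hz, ← Matrix.dotProduct_mulVec, hAz, dotProduct_comm, hzval]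
  have hBy : B.mulVec yy = yy () • b := by
    funext i
    simp [hB, Matrix.mulVec, dotProduct, mul_comm]
  have hBHx : Bᴴ.mulVec xx = fun _ : Unit => b ⬝ᵥ xx := by
    funext u
    simp [hB, Matrix.mulVec, dotProduct]
  have hDy : D.mulVec yy = fun _ : Unit => d * yy () := by
    funext u
    simp [hD, Matrix.mulVec, dotProduct]
  have h2' : b ⬝ᵥ xx + d * yy () = c := by
    rw [← h2, hBHx, hDy]; simp
  have hm : b ⬝ᵥ A⁻¹.mulVec g = b ⬝ᵥ xx + yy () * (b ⬝ᵥ A⁻¹.mulVec b) := by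
    rw [← hzval, hz, dotProduct_add, hABy, hBy, Matrix.mulVec_smul, dotProduct_smul]
    simp [smul_eq_mul]
  have hys : s * yy () = c - b ⬝ᵥ A⁻¹.mulVec g := by
    rw [hm, ← h2', hs]; ring
  have hterm2 : yy ᵥ* (D - Bᴴ * A⁻¹ * B) ⬝ᵥ yy = (c - b ⬝ᵥ A⁻¹.mulVec g) ^ 2 / s := by
    have hentry : (D - Bᴴ * A⁻¹ * B) () () = s := schur_entry A b d
    have : yy ᵥ* (D - Bᴴ * A⁻¹ * B) ⬝ᵥ yy = yy () * ((D - Bᴴ * A⁻¹ * B) () () * yy ()) := by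
      simp [Matrix.vecMul, dotProduct, mul_assoc]
    rw [this, hentry, ← hys]
    field_simp
  rw [hterm1, hterm2]

end BlockQuad

/-- The equiv `↥(T.erase t) ⊕ Unit ≃ ↥T`. -/
private def eraseEquiv [DecidableEq Ω] {T : Finset Ω} {t : Ω} (ht : t ∈ T) :
    (↥(T.erase t) ⊕ Unit) ≃ ↥T where
  toFun := Sum.elim (fun s => ⟨s.1, Finset.mem_of_mem_erase s.2⟩) (fun _ => ⟨t, ht⟩)
  invFun a := if h : a.1 = t then Sum.inr () else Sum.inl ⟨a.1, Finset.mem_erase.2 ⟨h, a.2⟩⟩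
  left_inv s := by
    rcases s with s | u
    · have : s.1 ≠ t := (Finset.mem_erase.1 s.2).1
      simp [this]
    · simp
  right_inv a := by
    by_cases h : a.1 = t
    · simp only [dif_pos h, Sum.elim_inr]
      exact Subtype.ext h.symm
    · simp [h]

private lemma peel [DecidableEq Ω] (k : Ω → Ω → ℝ) (hsym : ∀ a b, k a b = k b a) (f : Ω → ℝ)
    {T : Finset Ω} {t : Ω} (ht : t ∈ T)
    (hT : IsUnit (gramOn k T)) (hS : IsUnit (gramOn k (T.erase t))) :
    postVar k (T.erase t) t ≠ 0 ∧
      Qform k f T = Qform k f (T.erase t) +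
        (f t - postMean k f (T.erase t) t) ^ 2 / postVar k (T.erase t) t := by
  set S := T.erase t with hSdef
  set A : Matrix S S ℝ := gramOn k S with hA
  set b : S → ℝ := fun s => k t s.1 with hb
  set g : S → ℝ := fun s => f s.1 with hg
  set B : Matrix S Unit ℝ := Matrix.of fun i (_ : Unit) => b i with hBdef
  set D : Matrix Unit Unit ℝ := Matrix.of fun _ _ : Unit => k t t with hDdef
  set e := eraseEquiv ht with he
  haveI : Invertible A := A.invertibleOfIsUnitDet ((Matrix.isUnit_iff_isUnit_det _).1 hS)
  have hAH : A.IsHermitian := by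
    ext i j
    simp only [hA, gramOn, Matrix.conjTranspose_apply, Matrix.of_apply, star_trivial]
    exact hsym _ _
  have hsub : (gramOn k T).submatrix e e = Matrix.fromBlocks A B Bᴴ D := by
    ext i j
    rcases i with i | u <;> rcases j with j | u' <;>
      simp [gramOn, hA, hBdef, hDdef, hb, he, eraseEquiv, Matrix.fromBlocks,
        Matrix.conjTranspose_apply, hsym t]
  have hgramT : gramOn k T = (Matrix.fromBlocks A B Bᴴ D).submatrix e.symm e.symm := by
    rw [← hsub]
    ext i j
    simp
  have hFunit : IsUnit (Matrix.fromBlocks A B Bᴴ D) := by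
    rw [← hsub]
    exact (Matrix.isUnit_submatrix_equiv e e).2 hT
  obtain ⟨h1, h2⟩ := block_quad A hAH b g (k t t) (f t) hFunit
  have hvar : postVar k S t = k t t - b ⬝ᵥ A⁻¹.mulVec b := rfl
  have hmean : postMean k f S t = b ⬝ᵥ A⁻¹.mulVec g := rfl
  refine ⟨by rw [hvar]; exact h1, ?_⟩
  have hcomp : (fun s : T => f s.1) ∘ e = Sum.elim g (fun _ : Unit => f t) := by
    funext i
    rcases i with i | u
    · rfl
    · rfl
  have hQT : Qform k f T = (Sum.elim g fun _ : Unit => f t) ⬝ᵥ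
      (Matrix.fromBlocks A B Bᴴ D)⁻¹.mulVec (Sum.elim g fun _ : Unit => f t) := by
    unfold Qform
    rw [hgramT, Matrix.inv_submatrix_equiv, Matrix.submatrix_mulVec_equiv]
    rw [Equiv.symm_symm, dotProduct_comp_equiv_symm, hcomp]
  have hQS : Qform k f S = g ⬝ᵥ A⁻¹.mulVec g := rfl
  rw [hQT, h2, hQS, hvar, hmean]

private lemma Qform_empty [DecidableEq Ω] (k : Ω → Ω → ℝ) (f : Ω → ℝ) :
    Qform k f (∅ : Finset Ω) = 0 := by
  simp [Qform, dotProduct]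

/-- Double counting: pairs `(A, n)` with `|A| = p+1`, `n ∈ A` correspond to pairs `(B, n)`
with `|B| = p`, `n ∉ B`. -/
private lemma sum_erase_eq {N : ℕ} (p : ℕ) (h : Finset (Fin N) → ℝ) :
    ∑ A ∈ Finset.powersetCard (p + 1) (Finset.univ : Finset (Fin N)), ∑ n ∈ A, h (A.erase n)
      = ∑ B ∈ Finset.powersetCard p (Finset.univ : Finset (Fin N)), ((N - p : ℕ) : ℝ) * h B := by
  have step1 : ∑ A ∈ Finset.powersetCard (p + 1) (Finset.univ : Finset (Fin N)),
      ∑ n ∈ A, h (A.erase n)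
      = ∑ B ∈ Finset.powersetCard p (Finset.univ : Finset (Fin N)),
        ∑ n ∈ Finset.univ \ B, h B := by
    rw [Finset.sum_sigma', Finset.sum_sigma']
    refine Finset.sum_nbij' (fun a => ⟨a.1.erase a.2, a.2⟩) (fun a => ⟨insert a.2 a.1, a.2⟩)
      ?_ ?_ ?_ ?_ ?_
    · rintro ⟨A, n⟩ hmem
      rw [Finset.mem_sigma] at hmem
      obtain ⟨hA, hn⟩ := hmem
      rw [Finset.mem_powersetCard] at hA
      rw [Finset.mem_sigma, Finset.mem_powersetCard]
      refine ⟨⟨Finset.subset_univ _, ?_⟩, ?_⟩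
      · rw [Finset.card_erase_of_mem hn, hA.2]
        rfl
      · simp
    · rintro ⟨B, n⟩ hmem
      rw [Finset.mem_sigma] at hmem
      obtain ⟨hB, hn⟩ := hmem
      rw [Finset.mem_powersetCard] at hB
      rw [Finset.mem_sdiff] at hn
      rw [Finset.mem_sigma, Finset.mem_powersetCard]
      exact ⟨⟨Finset.subset_univ _, by rw [Finset.card_insert_of_notMem hn.2, hB.2]⟩,
        Finset.mem_insert_self _ _⟩
    · rintro ⟨A, n⟩ hmem
      rw [Finset.mem_sigma] at hmem
      simp only
      congr 1
      exact Finset.insert_erase hmem.2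
    · rintro ⟨B, n⟩ hmem
      rw [Finset.mem_sigma, Finset.mem_sdiff] at hmem
      simp only
      congr 1
      exact Finset.erase_insert hmem.2.2
    · rintro ⟨A, n⟩ hmem
      rfl
  rw [step1]
  refine Finset.sum_congr rfl fun B hB => ?_
  rw [Finset.mem_powersetCard] at hB
  rw [Finset.sum_const, Finset.card_sdiff_of_subset (Finset.subset_univ B), Finset.card_univ,
    Fintype.card_fin, hB.2, nsmul_eq_mul]

/-- If `x_1, …, x_N` are pairwise distinct, `k` is symmetric and every Gram submatrix over a
subset of `{x_1, …, x_N}` is invertible, then the ML scale estimator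
`σ̂_ML² = (1/N) f(𝐱)ᵀ K⁻¹ f(𝐱)` is the average of the leave-`p`-out CV estimators:
`σ̂_ML² = (1/N) Σ_{p=1}^{N} σ̂_{CV(p)}²`. -/
theorem ml_eq_average_lpo [DecidableEq Ω] (k : Ω → Ω → ℝ)
    (hsym : ∀ a b, k a b = k b a) (N : ℕ) (x : Fin N → Ω) (hinj : Function.Injective x)
    (f : Ω → ℝ)
    (hinv : ∀ S : Finset Ω, S ⊆ Finset.image x Finset.univ → IsUnit (gramOn k S)) :
    (1 / (N : ℝ)) *
        ((fun i => f (x i)) ⬝ᵥ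
          (Matrix.of fun i j : Fin N => k (x i) (x j))⁻¹.mulVec fun i => f (x i)) =
      (1 / (N : ℝ)) * ∑ p ∈ Finset.Icc 1 N, sigmaCVp k f N x p := by
  set q : Finset (Fin N) → ℝ := fun B => Qform k f (Finset.image x B) with hq
  have hqunit : ∀ B : Finset (Fin N), IsUnit (gramOn k (Finset.image x B)) :=
    fun B => hinv _ (Finset.image_subset_image (Finset.subset_univ B))
  -- Step 1: the residual identity
  have hres : ∀ A : Finset (Fin N), ∀ n ∈ A,
      (f (x n) - postMean k f (Finset.image x (Finset.univ \ A)) (x n)) ^ 2 /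
          postVar k (Finset.image x (Finset.univ \ A)) (x n)
        = q (Finset.univ \ A.erase n) - q (Finset.univ \ A) := by
    intro A n hn
    have hmemn : n ∈ Finset.univ \ A.erase n := by simp
    have hTmem : x n ∈ Finset.image x (Finset.univ \ A.erase n) :=
      Finset.mem_image_of_mem x hmemn
    have hset : (Finset.univ \ A.erase n).erase n = Finset.univ \ A := by
      ext m
      by_cases hm : m = n
      · subst hm; simp [hn]
      · simp [hm]
    have herase : (Finset.image x (Finset.univ \ A.erase n)).erase (x n)
        = Finset.image x (Finset.univ \ A) := by
      rw [← Finset.image_erase hinj, hset]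
    have hSu : IsUnit (gramOn k ((Finset.image x (Finset.univ \ A.erase n)).erase (x n))) := by
      rw [herase]; exact hqunit _
    obtain ⟨h1, h2⟩ := peel k hsym f hTmem (hqunit _) hSu
    rw [herase] at h2
    simp only [hq]
    linarith [h2]
  -- Step 2: each CV estimator is a difference of consecutive averages
  set E : ℕ → ℝ := fun j => (1 / (N.choose j : ℝ)) *
      ∑ B ∈ Finset.powersetCard j (Finset.univ : Finset (Fin N)), q (Finset.univ \ B) with hE
  have hstep : ∀ p ∈ Finset.Icc 1 N, sigmaCVp k f N x p = E (p - 1) - E p := by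
    intro p hp
    rw [Finset.mem_Icc] at hp
    obtain ⟨hp1, hpN⟩ := hp
    have hpp : p - 1 + 1 = p := Nat.succ_pred_eq_of_pos hp1
    have hinner : ∀ A ∈ Finset.powersetCard p (Finset.univ : Finset (Fin N)),
        ∑ n ∈ A, (f (x n) - postMean k f (Finset.image x (Finset.univ \ A)) (x n)) ^ 2 /
            postVar k (Finset.image x (Finset.univ \ A)) (x n)
          = (∑ n ∈ A, q (Finset.univ \ A.erase n)) - (p : ℝ) * q (Finset.univ \ A) := by
      intro A hA
      rw [Finset.mem_powersetCard] at hA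
      rw [Finset.sum_congr rfl (fun n hn => hres A n hn), Finset.sum_sub_distrib,
        Finset.sum_const, hA.2, nsmul_eq_mul]
    set C : ℝ := (N.choose p : ℝ) with hC
    set C1 : ℝ := (N.choose (p - 1) : ℝ) with hC1
    set m : ℝ := ((N - (p - 1) : ℕ) : ℝ) with hm
    set S1 : ℝ := ∑ A ∈ Finset.powersetCard p (Finset.univ : Finset (Fin N)),
      ∑ n ∈ A, q (Finset.univ \ A.erase n) with hS1
    set S2 : ℝ := ∑ A ∈ Finset.powersetCard p (Finset.univ : Finset (Fin N)),
      q (Finset.univ \ A) with hS2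
    set T1 : ℝ := ∑ B ∈ Finset.powersetCard (p - 1) (Finset.univ : Finset (Fin N)),
      q (Finset.univ \ B) with hT1
    have hS1T1 : S1 = m * T1 := by
      have := sum_erase_eq (N := N) (p - 1) (fun B => q (Finset.univ \ B))
      rw [hpp] at this
      rw [hS1, this, ← Finset.mul_sum, hm, hT1]
    have hCne : C ≠ 0 := Nat.cast_ne_zero.2 (Nat.choose_pos hpN).ne'
    have hC1ne : C1 ≠ 0 := Nat.cast_ne_zero.2 (Nat.choose_pos (le_trans (Nat.pred_le p) hpN)).ne'
    have hpne : (p : ℝ) ≠ 0 := Nat.cast_ne_zero.2 (Nat.one_le_iff_ne_zero.1 hp1)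
    have hmne : m ≠ 0 := by
      rw [hm]
      have : p - 1 < N := lt_of_lt_of_le (Nat.pred_lt (Nat.one_le_iff_ne_zero.1 hp1)) hpN
      exact Nat.cast_ne_zero.2 (Nat.sub_ne_zero_of_lt this)
    have hchoose : C * (p : ℝ) = C1 * m := by
      have h := Nat.choose_succ_right_eq N (p - 1)
      rw [hpp] at h
      rw [hC, hC1, hm]
      exact_mod_cast h
    have hexp : sigmaCVp k f N x p = (1 / C) * ((1 / (p : ℝ)) * (S1 - (p : ℝ) * S2)) := by
      unfold sigmaCVp
      rw [Finset.sum_congr rfl (fun A hA => by rw [hinner A hA])]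
      rw [← Finset.mul_sum, Finset.sum_sub_distrib, ← Finset.mul_sum, ← hS1, ← hS2, hC]
    rw [hexp, hS1T1]
    have hEp1 : E (p - 1) = (1 / C1) * T1 := rfl
    have hEp : E p = (1 / C) * S2 := rfl
    rw [hEp1, hEp]
    have key : (1 : ℝ) / C * (1 / (p : ℝ)) * m = 1 / C1 := by
      have h' : (1 : ℝ) / C * (1 / (p : ℝ)) * m = m / (C * (p : ℝ)) := by ring
      rw [h', div_eq_div_iff (mul_ne_zero hCne hpne) hC1ne]
      linear_combination -hchoose
    have expand : 1 / C * (1 / (p : ℝ) * (m * T1 - (p : ℝ) * S2))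
        = (1 / C * (1 / (p : ℝ)) * m) * T1 - 1 / C * S2 := by
      field_simp
    rw [expand, key]
  -- Step 3: telescoping
  have htel : ∑ p ∈ Finset.Icc 1 N, sigmaCVp k f N x p = E 0 - E N := by
    rw [Finset.sum_congr rfl hstep]
    have hIcc : Finset.Icc 1 N = Finset.Ico 1 (N + 1) := by rw [Finset.Ico_add_one_right_eq_Icc]
    rw [hIcc, Finset.sum_Ico_eq_sum_range]
    have hterm : ∀ i, E (1 + i - 1) - E (1 + i) = E i - E (i + 1) := by
      intro i
      rw [Nat.add_sub_cancel_left, add_comm]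
    rw [Nat.add_sub_cancel]
    rw [Finset.sum_congr rfl (fun i _ => hterm i), Finset.sum_range_sub' E N]
  have hE0 : E 0 = q Finset.univ := by
    rw [hE]
    simp [Finset.powersetCard_zero]
  have hEN : E N = 0 := by
    have hps : Finset.powersetCard N (Finset.univ : Finset (Fin N)) = {Finset.univ} := by
      have h := Finset.powersetCard_self (Finset.univ : Finset (Fin N))
      rwa [Finset.card_univ, Fintype.card_fin] at h
    have hENdef : E N = (1 / (N.choose N : ℝ)) *
        ∑ B ∈ Finset.powersetCard N (Finset.univ : Finset (Fin N)), q (Finset.univ \ B) := rfl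
    rw [hENdef, hps]
    simp [hq, Qform_empty]
  -- Step 4: the full quadratic form equals `q univ`
  have hLHS : ((fun i => f (x i)) ⬝ᵥ
      (Matrix.of fun i j : Fin N => k (x i) (x j))⁻¹.mulVec fun i => f (x i))
      = q Finset.univ := by
    have hbij : Function.Bijective
        (fun i : Fin N => (⟨x i, Finset.mem_image_of_mem x (Finset.mem_univ i)⟩ :
          ↥(Finset.image x Finset.univ))) := by
      constructor
      · intro i j hij
        exact hinj (congrArg Subtype.val hij)
      · rintro ⟨a, ha⟩
        obtain ⟨i, _, hi⟩ := Finset.mem_image.1 ha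
        exact ⟨i, Subtype.ext hi⟩
    set e : Fin N ≃ ↥(Finset.image x Finset.univ) := Equiv.ofBijective _ hbij with he
    have hgi : gramOn k (Finset.image x Finset.univ)
        = (Matrix.of fun i j : Fin N => k (x i) (x j)).submatrix e.symm e.symm := by
      ext a b
      have h1 : (e (e.symm a)).1 = a.1 := congrArg Subtype.val (e.apply_symm_apply a)
      have h2 : (e (e.symm b)).1 = b.1 := congrArg Subtype.val (e.apply_symm_apply b)
      exact congrArg₂ k h1.symm h2.symm
    have hcm : (fun s : ↥(Finset.image x Finset.univ) => f s.1) ∘ e = fun i => f (x i) := rfl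
    have : Qform k f (Finset.image x Finset.univ)
        = ((fun s : ↥(Finset.image x Finset.univ) => f s.1) ∘ e) ⬝ᵥ
          (Matrix.of fun i j : Fin N => k (x i) (x j))⁻¹.mulVec
            ((fun s : ↥(Finset.image x Finset.univ) => f s.1) ∘ e) := by
      unfold Qform
      rw [hgi, Matrix.inv_submatrix_equiv, Matrix.submatrix_mulVec_equiv, Equiv.symm_symm,
        dotProduct_comp_equiv_symm]
    rw [hcm] at this
    exact this.symm
  rw [hLHS, htel, hE0, hEN, sub_zero]
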